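/- Let H ≥ 1 and define α_t = (H+1)/(H+t), α_t^i = α_i ∏_{j=i+1}^t (1-α_j) for 1 ≤ i ≤ t. Then for every i ≥ 1, the infinite sum ∑_{t=i}^∞ α_t^i equals 1 + 1/H. -/

import Mathlib

/-- Learning rate α_t = (H+1)/(H+t). -/
noncomputable def lrate (H t : ℕ) : ℝ := (H + 1) / (H + t)

/-- Cumulative weight α_t^i = α_i ∏_{j=i+1}^t (1 - α_j). -/
noncomputable def lweight (H i t : ℕ) : ℝ :=
  lrate H i * ∏ j ∈ Finset.Icc (i + 1) t, (1 - lrate H j)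

/-- Auxiliary product Q_t = ∏_{j=i+1}^t (j-1)/(H+j-1). -/
noncomputable def lQ (H i t : ℕ) : ℝ :=
  ∏ j ∈ Finset.Icc (i + 1) t, (((j : ℝ) - 1) / ((H : ℝ) + j - 1))

/-- Auxiliary telescoping function F_t = (H+1)/H * Q_t. -/
noncomputable def lF (H i t : ℕ) : ℝ := ((H : ℝ) + 1) / H * lQ H i t

lemma lQ_nonneg (H i t : ℕ) : 0 ≤ lQ H i t := by
  apply Finset.prod_nonneg
  intro j hj
  rw [Finset.mem_Icc] at hj
  have h1 : (1 : ℝ) ≤ (j : ℝ) := by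
    have : 1 ≤ j := by omega
    exact_mod_cast this
  have h2 : (0 : ℝ) ≤ (H : ℝ) := Nat.cast_nonneg H
  apply div_nonneg <;> linarith

lemma lQ_succ (H i t : ℕ) (ht : i ≤ t) :
    lQ H i (t + 1) = lQ H i t * ((t : ℝ) / ((H : ℝ) + t)) := by
  unfold lQ
  rw [Finset.prod_Icc_succ_top (by omega)]
  push_cast
  ring

lemma lrate_succ (H t : ℕ) (hHt1 : ((H : ℝ) + t + 1) ≠ 0) :
    1 - lrate H (t + 1) = (t : ℝ) / ((H : ℝ) + (t : ℝ) + 1) := by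
  unfold lrate
  push_cast
  have h : ((H : ℝ) + ((t : ℝ) + 1)) = (H : ℝ) + (t : ℝ) + 1 := by ring
  rw [h, eq_div_iff hHt1, sub_mul, one_mul, div_mul_cancel₀ _ hHt1]
  ring

lemma lweight_eq (H i : ℕ) (hH : 1 ≤ H) (hi : 1 ≤ i) :
    ∀ t, i ≤ t → lweight H i t = ((H : ℝ) + 1) / ((H : ℝ) + t) * lQ H i t := by
  intro t ht
  induction t, ht using Nat.le_induction with
  | base =>
    unfold lweight lQ lrate
    rw [Finset.Icc_eq_empty (by omega)]
    simp
  | succ t ht ih =>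
    have hH1 : (1 : ℝ) ≤ (H : ℝ) := by exact_mod_cast hH
    have ht0 : (0 : ℝ) ≤ (t : ℝ) := Nat.cast_nonneg t
    have hHt : ((H : ℝ) + t) ≠ 0 := by positivity
    have hHt1 : ((H : ℝ) + t + 1) ≠ 0 := by positivity
    have hlw : lweight H i (t + 1) = lweight H i t * (1 - lrate H (t + 1)) := by
      unfold lweight
      rw [Finset.prod_Icc_succ_top (by omega)]
      ring
    rw [hlw, ih, lQ_succ H i t ht, lrate_succ H t hHt1]
    push_cast
    field_simp
    ring

lemma lweight_tele (H i : ℕ) (hH : 1 ≤ H) (hi : 1 ≤ i) (t : ℕ) (ht : i ≤ t) :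
    lweight H i t = lF H i t - lF H i (t + 1) := by
  rw [lweight_eq H i hH hi t ht]
  unfold lF
  rw [lQ_succ H i t ht]
  have hH1 : (1 : ℝ) ≤ (H : ℝ) := by exact_mod_cast hH
  have ht0 : (0 : ℝ) ≤ (t : ℝ) := Nat.cast_nonneg t
  have hH0 : (H : ℝ) ≠ 0 := by positivity
  have hHt : ((H : ℝ) + t) ≠ 0 := by positivity
  field_simp
  ring

lemma lQ_bound (H i : ℕ) (hH : 1 ≤ H) (hi : 1 ≤ i) :
    ∀ t, i ≤ t → lQ H i t ≤ (i : ℝ) / t := by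
  intro t ht
  induction t, ht using Nat.le_induction with
  | base =>
    unfold lQ
    rw [Finset.Icc_eq_empty (by omega), Finset.prod_empty]
    have hi0 : (0 : ℝ) < (i : ℝ) := by exact_mod_cast hi
    rw [div_self (ne_of_gt hi0)]
  | succ t ht ih =>
    have hH1 : (1 : ℝ) ≤ (H : ℝ) := by exact_mod_cast hH
    have ht1 : (1 : ℝ) ≤ (t : ℝ) := by exact_mod_cast le_trans hi ht
    have hi0 : (0 : ℝ) ≤ (i : ℝ) := Nat.cast_nonneg i
    rw [lQ_succ H i t ht]
    have key : (t : ℝ) / ((H : ℝ) + t) ≤ (t : ℝ) / ((t : ℝ) + 1) := by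
      apply div_le_div_of_nonneg_left (by linarith) (by linarith) (by linarith)
    calc lQ H i t * ((t : ℝ) / ((H : ℝ) + t))
        ≤ ((i : ℝ) / t) * ((t : ℝ) / ((t : ℝ) + 1)) := by
          apply mul_le_mul ih key
          · apply div_nonneg (by linarith) (by linarith)
          · apply div_nonneg hi0 (by linarith)
      _ = (i : ℝ) / ((t : ℝ) + 1) := by
          field_simp
      _ = (i : ℝ) / ((t + 1 : ℕ) : ℝ) := by push_cast; ring

lemma lF_tendsto (H i : ℕ) (hH : 1 ≤ H) (hi : 1 ≤ i) :
    Filter.Tendsto (fun t => lF H i t) Filter.atTop (nhds 0) := by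
  have hH1 : (1 : ℝ) ≤ (H : ℝ) := by exact_mod_cast hH
  have hc : (0 : ℝ) ≤ ((H : ℝ) + 1) / H := by positivity
  have hupper : Filter.Tendsto (fun t : ℕ => ((H : ℝ) + 1) / H * ((i : ℝ) / t))
      Filter.atTop (nhds 0) := by
    have h1 : Filter.Tendsto (fun t : ℕ => (i : ℝ) / t) Filter.atTop (nhds 0) := by
      have := tendsto_one_div_atTop_nhds_zero_nat.const_mul (i : ℝ)
      simpa [div_eq_mul_inv] using this
    simpa using h1.const_mul (((H : ℝ) + 1) / H)
  apply squeeze_zero_norm' _ hupper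
  filter_upwards [Filter.eventually_ge_atTop i] with t ht
  have h0 : 0 ≤ lF H i t := mul_nonneg hc (lQ_nonneg H i t)
  rw [Real.norm_eq_abs, abs_of_nonneg h0]
  unfold lF
  exact mul_le_mul_of_nonneg_left (lQ_bound H i hH hi t ht) hc

theorem stmt2 (H : ℕ) (hH : 1 ≤ H) (i : ℕ) (hi : 1 ≤ i) :
    ∑' t : ℕ, (if i ≤ t then lweight H i t else 0) = 1 + 1 / (H : ℝ) := by
  set u : ℕ → ℝ := fun t => if i ≤ t then lweight H i t else 0 with hu
  have hH1 : (1 : ℝ) ≤ (H : ℝ) := by exact_mod_cast hH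
  -- partial sums
  have hpart : ∀ n, i ≤ n → ∑ t ∈ Finset.range (n + 1), u t = lF H i i - lF H i (n + 1) := by
    intro n hn
    induction n, hn using Nat.le_induction with
    | base =>
      rw [Finset.sum_range_succ]
      have hz : ∑ t ∈ Finset.range i, u t = 0 := by
        apply Finset.sum_eq_zero
        intro t ht
        rw [Finset.mem_range] at ht
        simp [hu, Nat.not_le.mpr ht]
      rw [hz, zero_add]
      simp only [hu, le_refl, if_true]
      exact lweight_tele H i hH hi i le_rfl
    | succ n hn ih =>
      rw [Finset.sum_range_succ, ih]
      have h2 : u (n + 1) = lF H i (n + 1) - lF H i (n + 2) := by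
        simp only [hu, (by omega : i ≤ n + 1), if_true]
        exact lweight_tele H i hH hi (n + 1) (by omega)
      rw [h2]
      ring
  -- value of lF at i
  have hFi : lF H i i = 1 + 1 / (H : ℝ) := by
    unfold lF lQ
    rw [Finset.Icc_eq_empty (by omega), Finset.prod_empty]
    have hH0 : (H : ℝ) ≠ 0 := by positivity
    field_simp
  -- the partial sums converge to 1 + 1/H
  have htend : Filter.Tendsto (fun n => ∑ t ∈ Finset.range n, u t)
      Filter.atTop (nhds (1 + 1 / (H : ℝ))) := by
    have h1 : Filter.Tendsto (fun n : ℕ => lF H i i - lF H i (n + 1))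
        Filter.atTop (nhds (1 + 1 / (H : ℝ))) := by
      have h0 := ((lF_tendsto H i hH hi).comp (Filter.tendsto_add_atTop_nat 1)).const_sub
        (lF H i i)
      rw [sub_zero] at h0
      simpa only [Function.comp_def, hFi] using h0
    have h2 : Filter.Tendsto (fun n : ℕ => ∑ t ∈ Finset.range (n + 1), u t)
        Filter.atTop (nhds (1 + 1 / (H : ℝ))) := by
      apply h1.congr'
      filter_upwards [Filter.eventually_ge_atTop i] with n hn
      exact (hpart n hn).symm
    exact (Filter.tendsto_add_atTop_iff_nat 1).mp h2
  -- nonnegativity of u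
  have hnn : ∀ t, 0 ≤ u t := by
    intro t
    simp only [hu]
    split
    · unfold lweight
      apply mul_nonneg
      · unfold lrate; positivity
      · apply Finset.prod_nonneg
        intro j hj
        rw [Finset.mem_Icc] at hj
        have hj1 : (1 : ℝ) ≤ (j : ℝ) := by
          have : 1 ≤ j := by omega
          exact_mod_cast this
        unfold lrate
        rw [sub_nonneg]
        apply div_le_one_of_le₀ (by linarith) (by positivity)
    · exact le_rfl
  have hsum : HasSum u (1 + 1 / (H : ℝ)) :=
    (hasSum_iff_tendsto_nat_of_nonneg hnn _).mpr htend
  exact hsum.tsum_eq
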